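/- Let N ≥ 1 and let u ∈ L²(ℝ^N) be a function that is not (almost everywhere) zero. Then the infimum over all k ∈ ℤ^N with k ≠ 0 of ‖u − u(· − k)‖_{L²(ℝ^N)} is strictly positive. -/

import Mathlib

open MeasureTheory Real

set_option maxHeartbeats 1000000
noncomputable section

abbrev Euc (N : ℕ) := EuclideanSpace ℝ (Fin N)

def intVec {N : ℕ} (k : Fin N → ℤ) : Euc N := WithLp.toLp 2 (fun i => (k i : ℝ))

lemma coord_abs_le_norm {N : ℕ} (v : Euc N) (i : Fin N) : |v i| ≤ ‖v‖ := by
  rw [EuclideanSpace.norm_eq, ← Real.sqrt_sq_eq_abs]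
  apply Real.sqrt_le_sqrt
  calc (v i)^2 = ‖v i‖^2 := by rw [Real.norm_eq_abs, sq_abs]
    _ ≤ _ := Finset.single_le_sum (f := fun j => ‖v j‖^2) (fun j _ => sq_nonneg _)
        (Finset.mem_univ i)

/-- For a nonzero `u ∈ L²(ℝ^N)`, the infimum over nonzero integer vectors `k` of the
`L²`-distance between `u` and its translate `u(· − k)` is strictly positive. -/
theorem translates_bounded_away (N : ℕ) (hN : 1 ≤ N) (u : Euc N → ℝ)
    (hu : MemLp u 2 (volume : Measure (Euc N)))
    (hne : ¬ u =ᵐ[(volume : Measure (Euc N))] (fun _ => (0 : ℝ))) :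
    0 < ⨅ (k : Fin N → ℤ) (_ : k ≠ 0),
        eLpNorm (fun x => u x - u (x - intVec k)) 2 (volume : Measure (Euc N)) := by
  have hmp : ∀ v : Euc N, MeasurePreserving (fun x => x - v)
      (volume : Measure (Euc N)) volume := fun v => measurePreserving_sub_right volume v
  have husm := hu.aestronglyMeasurable
  have htsm : ∀ v : Euc N, AEStronglyMeasurable (fun x => u (x - v)) (volume : Measure (Euc N)) :=
    fun v => husm.comp_measurePreserving (hmp v)
  have hdsm : ∀ v : Euc N, AEStronglyMeasurable (fun x => u x - u (x - v))
      (volume : Measure (Euc N)) := fun v => husm.sub (htsm v)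
  set ε := eLpNorm u 2 (volume : Measure (Euc N)) with hεdef
  have hε0 : ε ≠ 0 := by
    rw [hεdef, Ne, eLpNorm_eq_zero_iff husm two_ne_zero]; exact hne
  have hεtop : ε ≠ ⊤ := hu.eLpNorm_ne_top
  have hc0 : (0 : ENNReal) < ε / 4 := ENNReal.div_pos hε0 (by norm_num)
  have hctop : ε / 4 ≠ ⊤ := by
    intro h
    exact hεtop (by simpa [ENNReal.div_eq_top] using h)
  -- approximation by a compactly supported continuous function
  obtain ⟨g, hgsupp, hgapprox, hgcont, hgmem⟩ :=
    hu.exists_hasCompactSupport_eLpNorm_sub_le ENNReal.ofNat_ne_top hc0.ne'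
  have hgsm : AEStronglyMeasurable g (volume : Measure (Euc N)) := hgcont.aestronglyMeasurable
  have hgtsm : ∀ v : Euc N, AEStronglyMeasurable (fun x => g (x - v))
      (volume : Measure (Euc N)) := fun v => hgsm.comp_measurePreserving (hmp v)
  obtain ⟨R₀, hR₀⟩ := (hgsupp.isBounded).subset_closedBall 0
  set R : ℝ := max R₀ 0 with hRdef
  have hR : tsupport g ⊆ Metric.closedBall 0 R :=
    hR₀.trans (Metric.closedBall_subset_closedBall (le_max_left _ _))
  have hRnn : 0 ≤ R := le_max_right _ _
  -- key far bound
  have far : ∀ v : Euc N, 2 * R + 1 ≤ ‖v‖ →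
      ε / 4 ≤ eLpNorm (fun x => u x - u (x - v)) 2 (volume : Measure (Euc N)) := by
    intro v hv
    -- pointwise bound on g
    have hgpt : ∀ x, ‖g x‖ ≤ ‖g x - g (x - v)‖ := by
      intro x
      by_cases hx : g x = 0
      · simp [hx]
      · have hx1 : x ∈ tsupport g := subset_closure hx
        have hx2 : ‖x‖ ≤ R := by simpa using hR hx1
        have hx3 : x - v ∉ tsupport g := by
          intro hmem
          have h1 : ‖x - v‖ ≤ R := by simpa using hR hmem
          have h2 : ‖v‖ ≤ ‖x‖ + ‖x - v‖ := by
            calc ‖v‖ = ‖x - (x - v)‖ := by congr 1; abel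
              _ ≤ ‖x‖ + ‖x - v‖ := norm_sub_le _ _
          linarith
        have : g (x - v) = 0 := image_eq_zero_of_notMem_tsupport hx3
        simp [this]
    have hg_le : eLpNorm g 2 (volume : Measure (Euc N)) ≤
        eLpNorm (fun x => g x - g (x - v)) 2 (volume : Measure (Euc N)) := eLpNorm_mono hgpt
    -- translation invariance for u - g
    have e2 : eLpNorm (fun x => u (x - v) - g (x - v)) 2 (volume : Measure (Euc N)) =
        eLpNorm (fun x => u x - g x) 2 (volume : Measure (Euc N)) :=
      eLpNorm_comp_measurePreserving (g := fun x => u x - g x) (f := fun x => x - v)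
        (husm.sub hgsm) (hmp v)
    have happrox' : eLpNorm (fun x => u x - g x) 2 (volume : Measure (Euc N)) ≤ ε / 4 := hgapprox
    -- triangle inequalities
    have e1 : eLpNorm (fun x => g x - g (x - v)) 2 (volume : Measure (Euc N)) ≤
        eLpNorm (fun x => g x - u x) 2 (volume : Measure (Euc N)) +
        (eLpNorm (fun x => u x - u (x - v)) 2 (volume : Measure (Euc N)) +
         eLpNorm (fun x => u (x - v) - g (x - v)) 2 (volume : Measure (Euc N))) := by
      have hA : AEStronglyMeasurable (fun x => g x - u x) (volume : Measure (Euc N)) :=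
        hgsm.sub husm
      have hB : AEStronglyMeasurable (fun x => u x - u (x - v)) (volume : Measure (Euc N)) :=
        hdsm v
      have hC : AEStronglyMeasurable (fun x => u (x - v) - g (x - v))
          (volume : Measure (Euc N)) := (htsm v).sub (hgtsm v)
      calc eLpNorm (fun x => g x - g (x - v)) 2 (volume : Measure (Euc N))
          = eLpNorm (fun x => (g x - u x) + ((u x - u (x - v)) + (u (x - v) - g (x - v)))) 2
            (volume : Measure (Euc N)) := by congr 1; funext x; ring
        _ ≤ eLpNorm (fun x => g x - u x) 2 (volume : Measure (Euc N)) +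
            eLpNorm (fun x => (u x - u (x - v)) + (u (x - v) - g (x - v))) 2
              (volume : Measure (Euc N)) := eLpNorm_add_le hA (hB.add hC) one_le_two
        _ ≤ _ := by
            gcongr
            exact eLpNorm_add_le hB hC one_le_two
    have e3 : eLpNorm (fun x => g x - u x) 2 (volume : Measure (Euc N)) =
        eLpNorm (fun x => u x - g x) 2 (volume : Measure (Euc N)) := by
      exact eLpNorm_sub_comm g u 2 (volume : Measure (Euc N))
    have e4 : ε ≤ ε / 4 + eLpNorm g 2 (volume : Measure (Euc N)) := by
      calc ε = eLpNorm (fun x => (u x - g x) + g x) 2 (volume : Measure (Euc N)) := by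
            rw [hεdef]; congr 1; funext x; ring
        _ ≤ eLpNorm (fun x => u x - g x) 2 (volume : Measure (Euc N)) +
            eLpNorm g 2 (volume : Measure (Euc N)) := eLpNorm_add_le (husm.sub hgsm) hgsm
              one_le_two
        _ ≤ _ := by gcongr
    -- combine
    set T := eLpNorm (fun x => u x - u (x - v)) 2 (volume : Measure (Euc N)) with hTdef
    have key : ε ≤ (ε / 4 + ε / 4 + ε / 4) + T := by
      calc ε ≤ ε / 4 + eLpNorm g 2 (volume : Measure (Euc N)) := e4
        _ ≤ ε / 4 + eLpNorm (fun x => g x - g (x - v)) 2 (volume : Measure (Euc N)) := by gcongr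
        _ ≤ ε / 4 + (eLpNorm (fun x => g x - u x) 2 (volume : Measure (Euc N)) + (T +
            eLpNorm (fun x => u (x - v) - g (x - v)) 2 (volume : Measure (Euc N)))) := by gcongr
        _ ≤ ε / 4 + (ε / 4 + (T + ε / 4)) := by
            gcongr
            · rw [e3]; exact happrox'
            · rw [e2]; exact happrox'
        _ = (ε / 4 + ε / 4 + ε / 4) + T := by ring
    have hsum : (ε / 4 + ε / 4 + ε / 4) + ε / 4 = ε := by
      calc (ε / 4 + ε / 4 + ε / 4) + ε / 4 = ε / 4 * 4 := by ring
        _ = ε := ENNReal.div_mul_cancel (by norm_num) (by norm_num)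
    have hfin3 : ε / 4 + ε / 4 + ε / 4 ≠ ⊤ := by
      simp [ENNReal.add_ne_top, hctop]
    have key' : (ε / 4 + ε / 4 + ε / 4) + ε / 4 ≤ (ε / 4 + ε / 4 + ε / 4) + T := by
      calc (ε / 4 + ε / 4 + ε / 4) + ε / 4 = ε := hsum
        _ ≤ _ := key
    exact (ENNReal.add_le_add_iff_left hfin3).mp key'
  -- every term is nonzero
  have pos : ∀ k : Fin N → ℤ, k ≠ 0 →
      eLpNorm (fun x => u x - u (x - intVec k)) 2 (volume : Measure (Euc N)) ≠ 0 := by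
    intro k hk hzero
    have hv : intVec k ≠ 0 := by
      intro h
      apply hk
      funext i
      have := congrArg (fun w : Euc N => w i) h
      simpa [intVec] using this
    have hvpos : (0 : ℝ) < ‖intVec k‖ := norm_pos_iff.mpr hv
    set v := intVec k with hvdef
    have hae : u =ᵐ[(volume : Measure (Euc N))] fun x => u (x - v) := by
      have h0 := (eLpNorm_eq_zero_iff (hdsm v) two_ne_zero).mp hzero
      filter_upwards [h0] with x hx
      have : u x - u (x - v) = 0 := hx
      linarith
    have hiter : ∀ n : ℕ, u =ᵐ[(volume : Measure (Euc N))] fun x => u (x - (n + 1) • v) := by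
      intro n
      induction n with
      | zero => simpa using hae
      | succ n ih =>
        have hcomp := ((hmp v).quasiMeasurePreserving).ae_eq ih
        calc u =ᵐ[(volume : Measure (Euc N))] fun x => u (x - v) := hae
          _ =ᵐ[(volume : Measure (Euc N))] fun x => u (x - v - (n + 1) • v) := hcomp
          _ = fun x => u (x - (n + 1 + 1) • v) := by
              funext x
              congr 1
              have hns : (n + 1 + 1) • v = v + (n + 1) • v := by
                rw [succ_nsmul]; exact add_comm _ _
              rw [hns, ← sub_sub]
    obtain ⟨n, hn⟩ := exists_nat_gt ((2 * R + 1) / ‖v‖)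
    have hnv : 2 * R + 1 ≤ ‖(n + 1) • v‖ := by
      rw [← Nat.cast_smul_eq_nsmul ℝ, norm_smul]
      have h1 : 2 * R + 1 < n * ‖v‖ := by
        rwa [div_lt_iff₀ hvpos] at hn
      have h2 : (n : ℝ) * ‖v‖ ≤ ((n : ℝ) + 1) * ‖v‖ := by nlinarith
      have : ‖((n : ℝ) + 1)‖ = (n : ℝ) + 1 := by
        rw [Real.norm_eq_abs, abs_of_nonneg (by positivity)]
      push_cast
      rw [this]
      linarith
    have hzero2 : eLpNorm (fun x => u x - u (x - (n + 1) • v)) 2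
        (volume : Measure (Euc N)) = 0 := by
      have : (fun x => u x - u (x - (n + 1) • v)) =ᵐ[(volume : Measure (Euc N))]
          (fun _ => (0 : ℝ)) := by
        filter_upwards [hiter n] with x hx
        simp [hx.symm]
      calc eLpNorm (fun x => u x - u (x - (n + 1) • v)) 2 (volume : Measure (Euc N))
          = eLpNorm (fun _ : Euc N => (0 : ℝ)) 2 (volume : Measure (Euc N)) :=
            eLpNorm_congr_ae this
        _ = 0 := eLpNorm_zero
    have := far ((n + 1) • v) hnv
    rw [hzero2] at this
    exact hc0.ne' (le_antisymm this zero_le) |>.elim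
  -- finiteness of small integer vectors
  have hfin : Set.Finite {k : Fin N → ℤ | k ≠ 0 ∧ ‖intVec k‖ ≤ 2 * R + 1} := by
    apply Set.Finite.subset
      (Set.Finite.pi (fun i : Fin N => Set.finite_Icc (-⌈2 * R + 1⌉) ⌈2 * R + 1⌉))
    intro k hk
    simp only [Set.mem_pi, Set.mem_univ, Set.mem_Icc, forall_true_left]
    intro i
    have h1 : |(k i : ℝ)| ≤ 2 * R + 1 := le_trans (coord_abs_le_norm (intVec k) i) hk.2
    have h2 : (k i : ℝ) ≤ 2 * R + 1 := (abs_le.mp h1).2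
    have h3 : -(2 * R + 1) ≤ (k i : ℝ) := (abs_le.mp h1).1
    constructor
    · have : (-⌈2 * R + 1⌉ : ℝ) ≤ (k i : ℝ) := by
        push_cast
        linarith [Int.le_ceil (2 * R + 1)]
      exact_mod_cast this
    · have : (k i : ℝ) ≤ (⌈2 * R + 1⌉ : ℝ) := le_trans h2 (Int.le_ceil _)
      exact_mod_cast this
  set F := hfin.toFinset with hFdef
  set term : (Fin N → ℤ) → ENNReal := fun k =>
    eLpNorm (fun x => u x - u (x - intVec k)) 2 (volume : Measure (Euc N)) with htermdef
  set δ : ENNReal := (ε / 4) ⊓ F.inf term with hδdef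
  have hδpos : 0 < δ := by
    rw [hδdef, lt_inf_iff]
    refine ⟨hc0, ?_⟩
    rw [Finset.lt_inf_iff (by norm_num : (0 : ENNReal) < ⊤)]
    intro k hkF
    have hk0 : k ≠ 0 := (hfin.mem_toFinset.mp hkF).1
    exact pos_iff_ne_zero.mpr (pos k hk0)
  refine lt_of_lt_of_le hδpos (le_iInf fun k => le_iInf fun hk => ?_)
  by_cases hksmall : ‖intVec k‖ ≤ 2 * R + 1
  · have hkF : k ∈ F := hfin.mem_toFinset.mpr ⟨hk, hksmall⟩
    exact le_trans inf_le_right (Finset.inf_le hkF)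
  · have : 2 * R + 1 ≤ ‖intVec k‖ := le_of_lt (lt_of_not_ge hksmall)
    exact le_trans inf_le_left (far (intVec k) this)
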